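/- Let M be a finite-dimensional associative unital algebra over ℂ with a nondegenerate symmetric cyclic bilinear form B. Let N₊ and N₋ be linear subspaces of M such that B restricts to a nondegenerate pairing between N₊ and N₋; choose a basis (α_i) of N₊ and the basis (β^i) of N₋ dual to it (B(α_i, β^k) = δ_i^k), and define the projectors π₊(μ) = Σ_i α_i B(μ, β^i) and π₋(μ) = Σ_i B(α_i, μ) β^i. Set M₊ = {μ ∈ M : π₊(a*μ)*b = a*π₊(μ*b) for all a, b ∈ N₊} and M₋ = {μ ∈ M : π₋(a*μ)*b = a*π₋(μ*b) for all a, b ∈ N₋}. If M = M₊ + M₋ as a linear space, then the canonical element Q = Σ_i α_i ⊗ β^i satisfies the Yang–Baxter equation Q₁₂ * Q₁₃ * Q₂₃ = Q₂₃ * Q₁₃ * Q₁₂ in M ⊗ M ⊗ M. -/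

import Mathlib

open scoped TensorProduct

noncomputable section

variable (M : Type) [Ring M] [Algebra ℂ M]

/-- Embedding of `M ⊗ M` into the first two factors of `M ⊗ M ⊗ M`. -/
noncomputable def emb12 : (M ⊗[ℂ] M) →ₐ[ℂ] (M ⊗[ℂ] M) ⊗[ℂ] M :=
  Algebra.TensorProduct.includeLeft

/-- Embedding of `M ⊗ M` into the first and third factors of `M ⊗ M ⊗ M`. -/
noncomputable def emb13 : (M ⊗[ℂ] M) →ₐ[ℂ] (M ⊗[ℂ] M) ⊗[ℂ] M :=
  Algebra.TensorProduct.map Algebra.TensorProduct.includeLeft (AlgHom.id ℂ M)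

/-- Embedding of `M ⊗ M` into the last two factors of `M ⊗ M ⊗ M`. -/
noncomputable def emb23 : (M ⊗[ℂ] M) →ₐ[ℂ] (M ⊗[ℂ] M) ⊗[ℂ] M :=
  Algebra.TensorProduct.map Algebra.TensorProduct.includeRight (AlgHom.id ℂ M)

/-- The Yang–Baxter equation for `R ∈ M ⊗ M`. -/
def YBE (R : M ⊗[ℂ] M) : Prop :=
  emb12 M R * emb13 M R * emb23 M R = emb23 M R * emb13 M R * emb12 M R

set_option maxHeartbeats 1000000 in
set_option synthInstance.maxHeartbeats 400000 in
lemma tensor_eq_zero_of_forall_dual {W V : Type*} [AddCommGroup W] [Module ℂ W]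
    [FiniteDimensional ℂ W] [AddCommGroup V] [Module ℂ V] (u : W ⊗[ℂ] V)
    (h : ∀ f : Module.Dual ℂ W, TensorProduct.lid ℂ V (LinearMap.rTensor V f u) = 0) :
    u = 0 := by
  set e := TensorProduct.congr (Module.evalEquiv ℂ W) (LinearEquiv.refl ℂ V) with he
  have key : ∀ (v : W ⊗[ℂ] V) (f : Module.Dual ℂ W),
      dualTensorHom ℂ (Module.Dual ℂ W) V (e v) f
        = TensorProduct.lid ℂ V (LinearMap.rTensor V f v) := by
    intro v f
    induction v using TensorProduct.induction_on with
    | zero => simp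
    | tmul x y => simp [he, Module.evalEquiv_apply]
    | add a b ha hb => simp only [map_add, LinearMap.add_apply, ha, hb]
  have h0 : dualTensorHom ℂ (Module.Dual ℂ W) V (e u) = 0 :=
    LinearMap.ext fun f => by simp [key u f, h f]
  have hinj : Function.Injective (dualTensorHom ℂ (Module.Dual ℂ W) V) := by
    intro a b hab
    apply (dualTensorHomEquiv ℂ (Module.Dual ℂ W) V).injective
    simpa using hab
  have h1 : e u = 0 := hinj (by simp [h0])
  simpa using (map_eq_zero_iff e e.injective).mp h1

lemma tensor_eq_zero_of_forall_ctr {W V : Type*} [AddCommGroup W] [Module ℂ W]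
    [FiniteDimensional ℂ W] [AddCommGroup V] [Module ℂ V]
    (B : W →ₗ[ℂ] W →ₗ[ℂ] ℂ) (hnd : ∀ a : W, (∀ b : W, B a b = 0) → a = 0)
    (u : W ⊗[ℂ] V)
    (h : ∀ μ : W, TensorProduct.lid ℂ V (LinearMap.rTensor V (B μ) u) = 0) :
    u = 0 := by
  apply tensor_eq_zero_of_forall_dual u
  intro f
  obtain ⟨μ, hμ⟩ := (LinearMap.BilinForm.toDual B (LinearMap.BilinForm.Nondegenerate.ofSeparatingLeft hnd)).surjective f
  have hBf : B μ = f := by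
    ext n; rw [← hμ]; exact (LinearMap.BilinForm.toDual_def (LinearMap.BilinForm.Nondegenerate.ofSeparatingLeft hnd)).symm
  rw [← hBf]; exact h μ

lemma ctr_eq {W V : Type*} [AddCommGroup W] [Module ℂ W]
    [FiniteDimensional ℂ W] [AddCommGroup V] [Module ℂ V]
    (B : W →ₗ[ℂ] W →ₗ[ℂ] ℂ) (hnd : ∀ a : W, (∀ b : W, B a b = 0) → a = 0)
    {u v : W ⊗[ℂ] V}
    (h : ∀ μ : W, TensorProduct.lid ℂ V (LinearMap.rTensor V (B μ) u)
        = TensorProduct.lid ℂ V (LinearMap.rTensor V (B μ) v)) :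
    u = v := by
  rw [← sub_eq_zero]
  exact tensor_eq_zero_of_forall_ctr B hnd _
    (fun μ => by rw [map_sub, map_sub, h μ, sub_self])

/-- Proposition 3: if `M = M₊ + M₋`, the canonical element `Q = Σ αᵢ ⊗ βⁱ` of the
pairing between the subspaces `N₊` and `N₋` satisfies the Yang–Baxter equation. -/
theorem stmt3
    [FiniteDimensional ℂ M]
    (B : M →ₗ[ℂ] M →ₗ[ℂ] ℂ)
    (hnd : ∀ a : M, (∀ b : M, B a b = 0) → a = 0)
    (hsymm : ∀ a b : M, B a b = B b a)
    (hcyc : ∀ a b c : M, B (a * b) c = B b (c * a))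
    (Np Nm : Submodule ℂ M)
    -- the pairing between N₊ and N₋ induced by B is nondegenerate
    (hpairP : ∀ x ∈ Np, (∀ y ∈ Nm, B x y = 0) → x = 0)
    (hpairM : ∀ y ∈ Nm, (∀ x ∈ Np, B x y = 0) → y = 0)
    -- a basis (α i) of N₊ and the dual basis (β i) of N₋
    (ι : Type) [Fintype ι] [DecidableEq ι] (α β : ι → M)
    (hmemP : ∀ i, α i ∈ Np) (hmemM : ∀ i, β i ∈ Nm)
    (hindP : LinearIndependent ℂ α) (hindM : LinearIndependent ℂ β)
    (hspanP : Submodule.span ℂ (Set.range α) = Np)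
    (hspanM : Submodule.span ℂ (Set.range β) = Nm)
    (hdual : ∀ i k : ι, B (α i) (β k) = if i = k then 1 else 0)
    -- the projectors π₊ and π₋
    (πp πm : M → M)
    (hπp : ∀ μ : M, πp μ = ∑ i, B μ (β i) • α i)
    (hπm : ∀ μ : M, πm μ = ∑ i, B (α i) μ • β i)
    -- M = M₊ + M₋ as a linear space
    (hMsum : ∀ μ : M, ∃ μp μm : M,
      (∀ a b : M, a ∈ Np → b ∈ Np → πp (a * μp) * b = a * πp (μp * b)) ∧
      (∀ a b : M, a ∈ Nm → b ∈ Nm → πm (a * μm) * b = a * πm (μm * b)) ∧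
      μ = μp + μm) :
    YBE M (∑ i, α i ⊗ₜ[ℂ] β i) := by
  classical
  -- basic consequences of symmetry and cyclicity
  have f3 : ∀ ν x y : M, B ν (x * y) = B y (ν * x) := by
    intro ν x y
    rw [hsymm ν (x * y), hcyc x y ν]
  have fassoc : ∀ a m b : M, B (a * m) b = B a (m * b) := by
    intro a m b
    rw [hsymm a (m * b), hcyc m b a, hsymm b (a * m)]
  -- linearity helpers
  have Bsum₁ : ∀ (c : ι → ℂ) (v : ι → M) (z : M),
      B (∑ i, c i • v i) z = ∑ i, c i * B (v i) z := by
    intro c v z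
    rw [map_sum, LinearMap.sum_apply]
    exact Finset.sum_congr rfl fun i _ => by
      rw [map_smul, LinearMap.smul_apply, smul_eq_mul]
  have hπm_lin : ∀ (c : ι → ℂ) (v : ι → M),
      πm (∑ i, c i • v i) = ∑ i, c i • πm (v i) := by
    intro c v
    rw [hπm]
    calc ∑ l, B (α l) (∑ i, c i • v i) • β l
        = ∑ l, ∑ i, (c i * B (α l) (v i)) • β l := by
          refine Finset.sum_congr rfl fun l _ => ?_
          rw [map_sum, Finset.sum_smul]
          exact Finset.sum_congr rfl fun i _ => by rw [map_smul, smul_eq_mul]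
      _ = ∑ i, ∑ l, (c i * B (α l) (v i)) • β l := Finset.sum_comm
      _ = ∑ i, c i • πm (v i) := by
          refine Finset.sum_congr rfl fun i _ => ?_
          rw [hπm, Finset.smul_sum]
          exact Finset.sum_congr rfl fun l _ => (smul_smul _ _ _).symm
  have πp_add : ∀ x y : M, πp (x + y) = πp x + πp y := by
    intro x y
    simp only [hπp, map_add, LinearMap.add_apply, add_smul, Finset.sum_add_distrib]
  -- tensor-sum helpers
  have hsumA : ∀ (c : ι → ℂ) (y x : M),
      ((∑ i, c i • α i) * y) ⊗ₜ[ℂ] x = ∑ i, c i • ((α i * y) ⊗ₜ[ℂ] x) := by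
    intro c y x
    rw [Finset.sum_mul, TensorProduct.sum_tmul]
    exact Finset.sum_congr rfl fun i _ => by
      rw [smul_mul_assoc, TensorProduct.smul_tmul']
  have hsumB : ∀ (c : ι → ℂ) (y x : M),
      (y * ∑ i, c i • α i) ⊗ₜ[ℂ] x = ∑ i, c i • ((y * α i) ⊗ₜ[ℂ] x) := by
    intro c y x
    rw [Finset.mul_sum, TensorProduct.sum_tmul]
    exact Finset.sum_congr rfl fun i _ => by
      rw [mul_smul_comm, TensorProduct.smul_tmul']
  -- conversion to projector form
  have toπL : ∀ μ : M,
      (∑ k, ∑ j, ∑ i, B μ (β i * α k) • ((α i * α j) ⊗ₜ[ℂ] (β j * β k)))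
        = ∑ k, ∑ j, (πp (α k * μ) * α j) ⊗ₜ[ℂ] (β j * β k) := by
    intro μ
    refine Finset.sum_congr rfl fun k _ => Finset.sum_congr rfl fun j _ => ?_
    rw [hπp (α k * μ), hsumA]
    exact Finset.sum_congr rfl fun i _ => by rw [hcyc (α k) μ (β i)]
  have toπR : ∀ μ : M,
      (∑ k, ∑ j, ∑ i, B μ (α i * β k) • ((α j * α k) ⊗ₜ[ℂ] (β i * β j)))
        = ∑ k, ∑ j, (α j * πp (μ * α k)) ⊗ₜ[ℂ] (β k * β j) := by
    intro μ
    -- reorder (k,j,i) ↦ (i,j,k)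
    rw [Finset.sum_comm]
    trans ∑ j, ∑ i, ∑ k, B μ (α i * β k) • ((α j * α k) ⊗ₜ[ℂ] (β i * β j))
    · exact Finset.sum_congr rfl fun j _ => Finset.sum_comm
    rw [Finset.sum_comm]
    refine Finset.sum_congr rfl fun i _ => Finset.sum_congr rfl fun j _ => ?_
    rw [hπp (μ * α i), hsumB]
    exact Finset.sum_congr rfl fun k _ => by rw [← fassoc μ (α i) (β k)]
  -- the key reduced identity
  have key : ∀ μ : M,
      (∑ k, ∑ j, (πp (α k * μ) * α j) ⊗ₜ[ℂ] (β j * β k))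
        = ∑ k, ∑ j, (α j * πp (μ * α k)) ⊗ₜ[ℂ] (β k * β j) := by
    intro μ
    obtain ⟨μp, μm, hp, hm, rfl⟩ := hMsum μ
    have splitL : ∀ k j : ι,
        (πp (α k * (μp + μm)) * α j) ⊗ₜ[ℂ] (β j * β k)
          = (πp (α k * μp) * α j) ⊗ₜ[ℂ] (β j * β k)
            + (πp (α k * μm) * α j) ⊗ₜ[ℂ] (β j * β k) := by
      intro k j
      rw [mul_add, πp_add, add_mul, TensorProduct.add_tmul]
    have splitR : ∀ k j : ι,
        (α j * πp ((μp + μm) * α k)) ⊗ₜ[ℂ] (β k * β j)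
          = (α j * πp (μp * α k)) ⊗ₜ[ℂ] (β k * β j)
            + (α j * πp (μm * α k)) ⊗ₜ[ℂ] (β k * β j) := by
      intro k j
      rw [add_mul, πp_add, mul_add, TensorProduct.add_tmul]
    simp only [splitL, splitR, Finset.sum_add_distrib]
    congr 1
    · -- the M₊ part
      calc ∑ k, ∑ j, (πp (α k * μp) * α j) ⊗ₜ[ℂ] (β j * β k)
          = ∑ k, ∑ j, (α k * πp (μp * α j)) ⊗ₜ[ℂ] (β j * β k) := by
            exact Finset.sum_congr rfl fun k _ => Finset.sum_congr rfl fun j _ => by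
              rw [hp (α k) (α j) (hmemP k) (hmemP j)]
        _ = ∑ k, ∑ j, (α j * πp (μp * α k)) ⊗ₜ[ℂ] (β k * β j) := Finset.sum_comm
    · -- the M₋ part
      refine ctr_eq B hnd fun ν => ?_
      simp only [map_sum, LinearMap.rTensor_tmul, TensorProduct.lid_tmul]
      calc ∑ k, ∑ j, B ν (πp (α k * μm) * α j) • (β j * β k)
          = ∑ k, πm (ν * πp (α k * μm)) * β k := by
            refine Finset.sum_congr rfl fun k _ => ?_
            rw [hπm (ν * πp (α k * μm)), Finset.sum_mul]
            refine Finset.sum_congr rfl fun j _ => ?_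
            rw [smul_mul_assoc, f3 ν (πp (α k * μm)) (α j)]
        _ = ∑ k, ∑ i, B (α k) (μm * β i) • (πm (ν * α i) * β k) := by
            refine Finset.sum_congr rfl fun k _ => ?_
            have hexp : πp (α k * μm) = ∑ i, B (α k) (μm * β i) • α i := by
              rw [hπp]
              exact Finset.sum_congr rfl fun i _ => by rw [fassoc (α k) μm (β i)]
            rw [hexp, Finset.mul_sum]
            simp only [mul_smul_comm]
            rw [hπm_lin, Finset.sum_mul]
            exact Finset.sum_congr rfl fun i _ => smul_mul_assoc _ _ _
        _ = ∑ i, πm (ν * α i) * πm (μm * β i) := by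
            rw [Finset.sum_comm]
            refine Finset.sum_congr rfl fun i _ => ?_
            rw [hπm (μm * β i), Finset.mul_sum]
            exact Finset.sum_congr rfl fun k _ => (mul_smul_comm _ _ _).symm
        _ = ∑ j, πm (ν * α j) * πm (μm * β j) := rfl
        _ = ∑ j, ∑ i, B (α i) (ν * α j) • (β i * πm (μm * β j)) := by
            refine Finset.sum_congr rfl fun j _ => ?_
            rw [hπm (ν * α j), Finset.sum_mul]
            exact Finset.sum_congr rfl fun i _ => smul_mul_assoc _ _ _
        _ = ∑ j, ∑ i, B (α i) (ν * α j) • (πm (β i * μm) * β j) := by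
            refine Finset.sum_congr rfl fun j _ => Finset.sum_congr rfl fun i _ => ?_
            rw [hm (β i) (β j) (hmemM i) (hmemM j)]
        _ = ∑ j, ∑ i, ∑ k, (B (α k) (β i * μm) * B (α i) (ν * α j)) • (β k * β j) := by
            refine Finset.sum_congr rfl fun j _ => Finset.sum_congr rfl fun i _ => ?_
            rw [hπm (β i * μm), Finset.sum_mul, Finset.smul_sum]
            refine Finset.sum_congr rfl fun k _ => ?_
            rw [smul_mul_assoc, smul_smul, mul_comm]
        _ = ∑ k, ∑ j, B ν (α j * πp (μm * α k)) • (β k * β j) := by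
            -- reorder (j,i,k) ↦ (k,j,i) and regroup
            rw [Finset.sum_comm]
            trans ∑ i, ∑ k, ∑ j, (B (α k) (β i * μm) * B (α i) (ν * α j)) • (β k * β j)
            · exact Finset.sum_congr rfl fun i _ => Finset.sum_comm
            rw [Finset.sum_comm]
            trans ∑ k, ∑ j, ∑ i, (B (α k) (β i * μm) * B (α i) (ν * α j)) • (β k * β j)
            · exact Finset.sum_congr rfl fun k _ => Finset.sum_comm
            refine Finset.sum_congr rfl fun k _ => Finset.sum_congr rfl fun j _ => ?_
            have hexp : πp (μm * α k) = ∑ i, B (α k) (β i * μm) • α i := by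
              rw [hπp]
              exact Finset.sum_congr rfl fun i _ => by rw [hcyc μm (α k) (β i)]
            rw [f3 ν (α j) (πp (μm * α k)), hexp, Bsum₁, Finset.sum_smul]
    -- done with key
  -- now the main reduction
  unfold YBE
  have hL : emb12 M (∑ i, α i ⊗ₜ[ℂ] β i) * emb13 M (∑ i, α i ⊗ₜ[ℂ] β i)
      * emb23 M (∑ i, α i ⊗ₜ[ℂ] β i)
      = ∑ k, ∑ j, ∑ i, ((α i * α j) ⊗ₜ[ℂ] (β i * α k)) ⊗ₜ[ℂ] (β j * β k) := by
    simp only [emb12, emb13, emb23, map_sum, Algebra.TensorProduct.map_tmul,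
      Algebra.TensorProduct.includeLeft_apply, Algebra.TensorProduct.includeRight_apply,
      AlgHom.coe_id, id_eq, Finset.sum_mul, Finset.mul_sum,
      Algebra.TensorProduct.tmul_mul_tmul, one_mul, mul_one]
  have hR : emb23 M (∑ i, α i ⊗ₜ[ℂ] β i) * emb13 M (∑ i, α i ⊗ₜ[ℂ] β i)
      * emb12 M (∑ i, α i ⊗ₜ[ℂ] β i)
      = ∑ k, ∑ j, ∑ i, ((α j * α k) ⊗ₜ[ℂ] (α i * β k)) ⊗ₜ[ℂ] (β i * β j) := by
    simp only [emb12, emb13, emb23, map_sum, Algebra.TensorProduct.map_tmul,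
      Algebra.TensorProduct.includeLeft_apply, Algebra.TensorProduct.includeRight_apply,
      AlgHom.coe_id, id_eq, Finset.sum_mul, Finset.mul_sum,
      Algebra.TensorProduct.tmul_mul_tmul, one_mul, mul_one]
  rw [hL, hR]
  apply ((TensorProduct.assoc ℂ M M M).trans (TensorProduct.leftComm ℂ M M M)).injective
  refine ctr_eq B hnd fun μ => ?_
  simp only [map_sum, LinearEquiv.trans_apply, TensorProduct.assoc_tmul,
    TensorProduct.leftComm_tmul, LinearMap.rTensor_tmul, TensorProduct.lid_tmul]
  rw [toπL μ, toπR μ]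
  exact key μ
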